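/- Let δ be a diagonal section, g_U the upper boundary function of the region D_f(δ). Then for every x₀ ∈ [0,1], max_{y ∈ [x₀,1]} (C̄_δ(x₀,y) − B_δ(x₀,y)) = C̄_δ(x₀, g_U(x₀)) − B_δ(x₀, g_U(x₀)) = min_{t ∈ [x₀, g_U(x₀)]} δ̂(t). -/

import Mathlib

open Set MeasureTheory Filter

def IsDiagonalSection (d : ℝ → ℝ) : Prop :=
  (∀ x ∈ Icc (0:ℝ) 1, d x ∈ Icc (0:ℝ) 1) ∧
  (∀ x ∈ Icc (0:ℝ) 1, d x ≤ x) ∧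
  (∀ x ∈ Icc (0:ℝ) 1, ∀ y ∈ Icc (0:ℝ) 1, x ≤ y → 0 ≤ d y - d x ∧ d y - d x ≤ 2*(y-x)) ∧
  d 1 = 1

noncomputable def TVd (d : ℝ → ℝ) (a b : ℝ) : ℝ :=
  variationOnFromTo (fun t => t - d t) (Icc (0:ℝ) 1) a b

noncomputable def fdelta (d : ℝ → ℝ) (x y : ℝ) : ℝ :=
  y - (1/2)*((x - d x) + (y - d y) + (TVd d 0 y - TVd d 0 x))

def DfO (d : ℝ → ℝ) : Set (ℝ × ℝ) :=
  {p | p.1 ∈ Icc (0:ℝ) 1 ∧ p.2 ∈ Icc (0:ℝ) 1 ∧ fdelta d p.1 p.2 < min p.1 p.2}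

def Df (d : ℝ → ℝ) : Set (ℝ × ℝ) :=
  closure (DfO d) ∪ {p | p.1 ∈ Icc (0:ℝ) 1 ∧ p.2 = p.1}

noncomputable def gU (d : ℝ → ℝ) (x : ℝ) : ℝ := sSup {y | (x, y) ∈ Df d}

noncomputable def gL (d : ℝ → ℝ) (x : ℝ) : ℝ := sInf {y | (x, y) ∈ Df d}

noncomputable def Bber (d : ℝ → ℝ) (x y : ℝ) : ℝ :=
  min x y - sInf ((fun t => t - d t) '' Icc (min x y) (max x y))

section Aux

variable {d : ℝ → ℝ}

lemma lip_e (hd : ∀ x ∈ Icc (0:ℝ) 1, ∀ y ∈ Icc (0:ℝ) 1, x ≤ y → 0 ≤ d y - d x ∧ d y - d x ≤ 2*(y-x)) :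
    LipschitzOnWith 1 (fun t => t - d t) (Icc (0:ℝ) 1) := by
  rw [lipschitzOnWith_iff_dist_le_mul]
  intro x hx y hy
  simp only [Real.dist_eq, NNReal.coe_one, one_mul]
  rcases le_total x y with h | h
  · obtain ⟨c1, c2⟩ := hd x hx y hy h
    have h1 : |x - y| = y - x := by rw [abs_sub_comm]; exact abs_of_nonneg (by linarith)
    rw [h1, abs_le]; constructor <;> linarith
  · obtain ⟨c1, c2⟩ := hd y hy x hx h
    have h1 : |x - y| = x - y := abs_of_nonneg (by linarith)
    rw [h1, abs_le]; constructor <;> linarith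

lemma lbv_e (hd : ∀ x ∈ Icc (0:ℝ) 1, ∀ y ∈ Icc (0:ℝ) 1, x ≤ y → 0 ≤ d y - d x ∧ d y - d x ≤ 2*(y-x)) :
    LocallyBoundedVariationOn (fun t => t - d t) (Icc (0:ℝ) 1) :=
  (lip_e hd).locallyBoundedVariationOn

lemma tv_le (hd : ∀ x ∈ Icc (0:ℝ) 1, ∀ y ∈ Icc (0:ℝ) 1, x ≤ y → 0 ≤ d y - d x ∧ d y - d x ≤ 2*(y-x))
    {a b : ℝ} (ha : a ∈ Icc (0:ℝ) 1) (hb : b ∈ Icc (0:ℝ) 1) (hab : a ≤ b) :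
    TVd d a b ≤ b - a := by
  rw [TVd, variationOnFromTo.eq_of_le _ _ hab]
  have h1 : eVariationOn (fun t => t - d t) (Icc (0:ℝ) 1 ∩ Icc a b)
      ≤ 1 * eVariationOn id (Icc (0:ℝ) 1 ∩ Icc a b) := by
    have := ((lip_e hd).mono (inter_subset_left)).comp_eVariationOn_le
      (g := id) (s := Icc (0:ℝ) 1 ∩ Icc a b) (Set.mapsTo_id _)
    simpa using this
  have h2 : eVariationOn id (Icc (0:ℝ) 1 ∩ Icc a b) ≤ ENNReal.ofReal (b - a) := by
    simpa using (monotoneOn_id (s := Icc (0:ℝ) 1)).eVariationOn_le ha hb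
  have := h1.trans (by simpa using h2)
  calc (eVariationOn (fun t => t - d t) (Icc (0:ℝ) 1 ∩ Icc a b)).toReal
      ≤ (ENNReal.ofReal (b - a)).toReal := ENNReal.toReal_mono (by simp) this
    _ = b - a := ENNReal.toReal_ofReal (by linarith)

lemma tv_nonneg {a b : ℝ} (hab : a ≤ b) : 0 ≤ TVd d a b :=
  variationOnFromTo.nonneg_of_le _ _ hab

lemma tv_add (hd : ∀ x ∈ Icc (0:ℝ) 1, ∀ y ∈ Icc (0:ℝ) 1, x ≤ y → 0 ≤ d y - d x ∧ d y - d x ≤ 2*(y-x))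
    {a b c : ℝ} (ha : a ∈ Icc (0:ℝ) 1) (hb : b ∈ Icc (0:ℝ) 1) (hc : c ∈ Icc (0:ℝ) 1) :
    TVd d a b + TVd d b c = TVd d a c :=
  variationOnFromTo.add (lbv_e hd) ha hb hc

lemma abs_sub_le_tv (hd : ∀ x ∈ Icc (0:ℝ) 1, ∀ y ∈ Icc (0:ℝ) 1, x ≤ y → 0 ≤ d y - d x ∧ d y - d x ≤ 2*(y-x))
    {a b : ℝ} (ha : a ∈ Icc (0:ℝ) 1) (hb : b ∈ Icc (0:ℝ) 1) (hab : a ≤ b) :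
    |(b - d b) - (a - d a)| ≤ TVd d a b := by
  rw [TVd, variationOnFromTo.eq_of_le _ _ hab]
  have hbv : BoundedVariationOn (fun t => t - d t) (Icc (0:ℝ) 1 ∩ Icc a b) :=
    lbv_e hd a b ha hb
  have hma : a ∈ Icc (0:ℝ) 1 ∩ Icc a b := ⟨ha, le_rfl, hab⟩
  have hmb : b ∈ Icc (0:ℝ) 1 ∩ Icc a b := ⟨hb, hab, le_rfl⟩
  rw [abs_le]
  constructor
  · have := hbv.sub_le hma hmb; linarith
  · have := hbv.sub_le hmb hma; linarith

lemma tv0_lip (hd : ∀ x ∈ Icc (0:ℝ) 1, ∀ y ∈ Icc (0:ℝ) 1, x ≤ y → 0 ≤ d y - d x ∧ d y - d x ≤ 2*(y-x)) :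
    LipschitzOnWith 1 (fun x => TVd d 0 x) (Icc (0:ℝ) 1) := by
  have h01 : (0:ℝ) ∈ Icc (0:ℝ) 1 := ⟨le_rfl, zero_le_one⟩
  rw [lipschitzOnWith_iff_dist_le_mul]
  intro a ha b hb
  simp only [Real.dist_eq, NNReal.coe_one, one_mul]
  rcases le_total a b with h | h
  · have hadd := tv_add hd h01 ha hb
    have h1 := tv_le hd ha hb h
    have h2 := tv_nonneg (d := d) h
    have e1 : |TVd d 0 a - TVd d 0 b| = TVd d a b := by
      rw [abs_sub_comm, abs_of_nonneg] <;> linarith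
    have e2 : |a - b| = b - a := by rw [abs_sub_comm]; exact abs_of_nonneg (by linarith)
    rw [e1, e2]; linarith
  · have hadd := tv_add hd h01 hb ha
    have h1 := tv_le hd hb ha h
    have h2 := tv_nonneg (d := d) h
    have e1 : |TVd d 0 a - TVd d 0 b| = TVd d b a := by
      rw [abs_of_nonneg] <;> linarith
    have e2 : |a - b| = a - b := abs_of_nonneg (by linarith)
    rw [e1, e2]; linarith

lemma cont_f (hd : ∀ x ∈ Icc (0:ℝ) 1, ∀ y ∈ Icc (0:ℝ) 1, x ≤ y → 0 ≤ d y - d x ∧ d y - d x ≤ 2*(y-x)) :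
    ContinuousOn (fun p : ℝ × ℝ => fdelta d p.1 p.2) (Icc (0:ℝ) 1 ×ˢ Icc (0:ℝ) 1) := by
  have hce : ContinuousOn (fun t : ℝ => t - d t) (Icc (0:ℝ) 1) := (lip_e hd).continuousOn
  have hcT : ContinuousOn (fun x => TVd d 0 x) (Icc (0:ℝ) 1) := (tv0_lip hd).continuousOn
  have h1 : ContinuousOn (fun p : ℝ × ℝ => p.1 - d p.1) (Icc (0:ℝ) 1 ×ˢ Icc (0:ℝ) 1) :=
    hce.comp continuousOn_fst (fun p hp => hp.1)
  have h2 : ContinuousOn (fun p : ℝ × ℝ => p.2 - d p.2) (Icc (0:ℝ) 1 ×ˢ Icc (0:ℝ) 1) :=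
    hce.comp continuousOn_snd (fun p hp => hp.2)
  have h3 : ContinuousOn (fun p : ℝ × ℝ => TVd d 0 p.2) (Icc (0:ℝ) 1 ×ˢ Icc (0:ℝ) 1) :=
    hcT.comp continuousOn_snd (fun p hp => hp.2)
  have h4 : ContinuousOn (fun p : ℝ × ℝ => TVd d 0 p.1) (Icc (0:ℝ) 1 ×ˢ Icc (0:ℝ) 1) :=
    hcT.comp continuousOn_fst (fun p hp => hp.1)
  simp only [fdelta]
  exact continuousOn_snd.sub (continuousOn_const.mul (((h1.add h2).add (h3.sub h4))))

lemma fdelta_bound (hd : ∀ x ∈ Icc (0:ℝ) 1, ∀ y ∈ Icc (0:ℝ) 1, x ≤ y → 0 ≤ d y - d x ∧ d y - d x ≤ 2*(y-x))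
    {x y₁ y₂ : ℝ} (h1 : y₁ ∈ Icc (0:ℝ) 1) (h2 : y₂ ∈ Icc (0:ℝ) 1) (h : y₁ ≤ y₂) :
    fdelta d x y₁ ≤ fdelta d x y₂ ∧ fdelta d x y₂ ≤ fdelta d x y₁ + (y₂ - y₁) := by
  have hadd := tv_add hd ⟨le_rfl, zero_le_one⟩ h1 h2
  have hle := tv_le hd h1 h2 h
  have hnn := tv_nonneg (d := d) h
  have habs := abs_sub_le_tv hd h1 h2 h
  have ha1 := le_abs_self ((y₂ - d y₂) - (y₁ - d y₁))
  have ha2 := neg_abs_le ((y₂ - d y₂) - (y₁ - d y₁))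
  simp only [fdelta]
  constructor <;> linarith

lemma bdd_below_img (hd2 : ∀ x ∈ Icc (0:ℝ) 1, d x ≤ x) {a b : ℝ}
    (ha : a ∈ Icc (0:ℝ) 1) (hb : b ∈ Icc (0:ℝ) 1) :
    BddBelow ((fun t => t - d t) '' Icc a b) := by
  refine ⟨0, ?_⟩
  rintro _ ⟨t, ht, rfl⟩
  have htI : t ∈ Icc (0:ℝ) 1 := ⟨ha.1.trans ht.1, ht.2.trans hb.2⟩
  have := hd2 t htI
  simp only; linarith

lemma inf_attained (hd : ∀ x ∈ Icc (0:ℝ) 1, ∀ y ∈ Icc (0:ℝ) 1, x ≤ y → 0 ≤ d y - d x ∧ d y - d x ≤ 2*(y-x))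
    {a b : ℝ} (ha : a ∈ Icc (0:ℝ) 1) (hb : b ∈ Icc (0:ℝ) 1) (hab : a ≤ b) :
    ∃ t ∈ Icc a b, sInf ((fun t => t - d t) '' Icc a b) = t - d t := by
  have hc : ContinuousOn (fun t => t - d t) (Icc a b) :=
    (lip_e hd).continuousOn.mono (Icc_subset_Icc ha.1 hb.2)
  obtain ⟨t, ht, h⟩ := isCompact_Icc.exists_sInf_image_eq ⟨a, left_mem_Icc.mpr hab⟩ hc
  exact ⟨t, ht, h⟩

end Aux

theorem section_max_at_gU (d : ℝ → ℝ) (hd : IsDiagonalSection d)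
    (x₀ : ℝ) (hx : x₀ ∈ Icc (0:ℝ) 1) :
    IsGreatest {v | ∃ y ∈ Icc x₀ 1,
        v = min x₀ (min y (fdelta d x₀ y)) - Bber d x₀ y}
      (min x₀ (min (gU d x₀) (fdelta d x₀ (gU d x₀))) - Bber d x₀ (gU d x₀)) ∧
    min x₀ (min (gU d x₀) (fdelta d x₀ (gU d x₀))) - Bber d x₀ (gU d x₀)
      = sInf ((fun t => t - d t) '' Icc x₀ (gU d x₀)) := by
  obtain ⟨hd1, hd2, hd3, hd4⟩ := hd
  have h01 : (0:ℝ) ∈ Icc (0:ℝ) 1 := ⟨le_rfl, zero_le_one⟩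
  have h11 : (1:ℝ) ∈ Icc (0:ℝ) 1 := ⟨zero_le_one, le_rfl⟩
  set S : Set ℝ := {y | (x₀, y) ∈ Df d} with hS
  -- closedness machinery
  set K : Set (ℝ × ℝ) := (Icc (0:ℝ) 1 ×ˢ Icc (0:ℝ) 1) ∩
    (fun p : ℝ × ℝ => fdelta d p.1 p.2 - min p.1 p.2) ⁻¹' (Iic 0) with hK
  have hKcont : ContinuousOn (fun p : ℝ × ℝ => fdelta d p.1 p.2 - min p.1 p.2)
      (Icc (0:ℝ) 1 ×ˢ Icc (0:ℝ) 1) :=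
    (cont_f hd3).sub ((continuous_fst.min continuous_snd).continuousOn)
  have hKclosed : IsClosed K :=
    hKcont.preimage_isClosed_of_isClosed (isClosed_Icc.prod isClosed_Icc) isClosed_Iic
  have hDfOK : DfO d ⊆ K := by
    rintro p ⟨hp1, hp2, hp3⟩
    exact ⟨⟨hp1, hp2⟩, by simp only [mem_preimage, mem_Iic]; linarith⟩
  have hclK : closure (DfO d) ⊆ K := closure_minimal hDfOK hKclosed
  -- facts about S
  have hx₀S : x₀ ∈ S := Or.inr ⟨hx, rfl⟩
  have hSb : ∀ y ∈ S, y ≤ 1 := by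
    rintro y (hy | hy)
    · exact ((hclK hy).1.2).2
    · rw [show y = x₀ from hy.2]; exact hx.2
  have hSbdd : BddAbove S := ⟨1, hSb⟩
  have hSclosed : IsClosed S := by
    have hdiag : IsClosed {p : ℝ × ℝ | p.1 ∈ Icc (0:ℝ) 1 ∧ p.2 = p.1} :=
      (isClosed_Icc.preimage continuous_fst).inter (isClosed_eq continuous_snd continuous_fst)
    exact (isClosed_closure.union hdiag).preimage (Continuous.prodMk_right x₀)
  have hyS : gU d x₀ ∈ S := hSclosed.csSup_mem ⟨x₀, hx₀S⟩ hSbdd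
  have hxy : x₀ ≤ gU d x₀ := le_csSup hSbdd hx₀S
  have hy1 : gU d x₀ ≤ 1 := hSb _ hyS
  have hyI : gU d x₀ ∈ Icc (0:ℝ) 1 := ⟨hx.1.trans hxy, hy1⟩
  -- f(x₀, y*) ≤ x₀
  have hfle : fdelta d x₀ (gU d x₀) ≤ x₀ := by
    rcases hyS with hcl | hdiag
    · have := (hclK hcl).2
      simp only [mem_preimage, mem_Iic] at this
      have hm : min x₀ (gU d x₀) = x₀ := min_eq_left hxy
      linarith [hm ▸ this]
    · have hEq : gU d x₀ = x₀ := hdiag.2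
      rw [hEq]
      have := hd2 x₀ hx
      simp only [fdelta, sub_self]
      linarith
  -- f(x₀, y*) ≥ x₀
  have hfge : x₀ ≤ fdelta d x₀ (gU d x₀) := by
    rcases eq_or_lt_of_le hy1 with h1 | h1
    · rw [h1]
      have he1 : (1:ℝ) - d 1 = 0 := by rw [hd4]; ring
      have hadd := tv_add hd3 h01 hx h11
      have hT : TVd d x₀ 1 ≤ 1 - x₀ := tv_le hd3 hx h11 hx.2
      have habs := abs_sub_le_tv hd3 hx h11 hx.2
      have hneg := neg_abs_le ((1 - d 1) - (x₀ - d x₀))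
      simp only [fdelta]
      linarith
    · by_contra hcon
      push_neg at hcon
      set y : ℝ := min 1 (gU d x₀ + (x₀ - fdelta d x₀ (gU d x₀)) / 2) with hy
      have hyy : gU d x₀ < y := lt_min h1 (by linarith)
      have hyI2 : y ∈ Icc (0:ℝ) 1 := ⟨hyI.1.trans hyy.le, min_le_left _ _⟩
      have hlip := (fdelta_bound (x := x₀) hd3 hyI hyI2 hyy.le).2
      have hylt : y - gU d x₀ ≤ (x₀ - fdelta d x₀ (gU d x₀)) / 2 := by
        have := min_le_right 1 (gU d x₀ + (x₀ - fdelta d x₀ (gU d x₀)) / 2)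
        linarith [this.trans_eq (rfl : _ = _)]
      have hfy : fdelta d x₀ y < x₀ := by linarith
      have hmem : (x₀, y) ∈ DfO d :=
        ⟨hx, hyI2, by rw [min_eq_left (hxy.trans hyy.le)]; exact hfy⟩
      have hyS' : y ∈ S := Or.inl (subset_closure hmem)
      exact absurd (le_csSup hSbdd hyS') (not_le.mpr hyy)
  -- value computation
  have hvalmin : min x₀ (min (gU d x₀) (fdelta d x₀ (gU d x₀))) = x₀ :=
    min_eq_left (le_min hxy hfge)
  have hBstar : Bber d x₀ (gU d x₀)
      = x₀ - sInf ((fun t => t - d t) '' Icc x₀ (gU d x₀)) := by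
    simp only [Bber, min_eq_left hxy, max_eq_right hxy]
  have hval : min x₀ (min (gU d x₀) (fdelta d x₀ (gU d x₀))) - Bber d x₀ (gU d x₀)
      = sInf ((fun t => t - d t) '' Icc x₀ (gU d x₀)) := by
    rw [hvalmin, hBstar]; ring
  refine ⟨⟨⟨gU d x₀, ⟨hxy, hy1⟩, rfl⟩, ?_⟩, hval⟩
  -- upper bound
  rintro v ⟨y, ⟨hy1', hy2'⟩, rfl⟩
  rw [hval]
  have hyI' : y ∈ Icc (0:ℝ) 1 := ⟨hx.1.trans hy1', hy2'⟩
  have hBy : Bber d x₀ y = x₀ - sInf ((fun t => t - d t) '' Icc x₀ y) := by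
    simp only [Bber, min_eq_left hy1', max_eq_right hy1']
  rw [hBy]
  have hneY : ((fun t => t - d t) '' Icc x₀ y).Nonempty :=
    ⟨x₀ - d x₀, x₀, left_mem_Icc.mpr hy1', rfl⟩
  have hneS : ((fun t => t - d t) '' Icc x₀ (gU d x₀)).Nonempty :=
    ⟨x₀ - d x₀, x₀, left_mem_Icc.mpr hxy, rfl⟩
  rcases le_total (gU d x₀) y with hc | hc
  · -- y* ≤ y
    have hA : min x₀ (min y (fdelta d x₀ y)) ≤ x₀ := min_le_left _ _
    have h2 : sInf ((fun t => t - d t) '' Icc x₀ y)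
        ≤ sInf ((fun t => t - d t) '' Icc x₀ (gU d x₀)) :=
      csInf_le_csInf (bdd_below_img hd2 hx hyI') hneS
        (image_mono (Icc_subset_Icc_right hc))
    linarith
  · -- y ≤ y*
    obtain ⟨t, ht, hμ⟩ := inf_attained hd3 hyI' hyI hc
    have htI : t ∈ Icc (0:ℝ) 1 := ⟨hyI'.1.trans ht.1, ht.2.trans hyI.2⟩
    have hA : min x₀ (min y (fdelta d x₀ y)) ≤ x₀ := min_le_left _ _
    have hB : min x₀ (min y (fdelta d x₀ y)) ≤ fdelta d x₀ y :=
      (min_le_right _ _).trans (min_le_right _ _)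
    have hmy_le : sInf ((fun t => t - d t) '' Icc x₀ y) ≤ y - d y :=
      csInf_le (bdd_below_img hd2 hx hyI') ⟨y, right_mem_Icc.mpr hy1', rfl⟩
    have hLy : (y - d y) - (t - d t) ≤ t - y := by
      have := lipschitzOnWith_iff_dist_le_mul.mp (lip_e hd3) y hyI' t htI
      simp only [Real.dist_eq, NNReal.coe_one, one_mul] at this
      have h1 := (le_abs_self ((y - d y) - (t - d t))).trans this
      have h2 : |y - t| = t - y := by rw [abs_sub_comm]; exact abs_of_nonneg (by linarith [ht.1])
      linarith [h2 ▸ h1]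
    have hLg : (gU d x₀ - d (gU d x₀)) - (t - d t) ≤ gU d x₀ - t := by
      have := lipschitzOnWith_iff_dist_le_mul.mp (lip_e hd3) (gU d x₀) hyI t htI
      simp only [Real.dist_eq, NNReal.coe_one, one_mul] at this
      have h1 := (le_abs_self ((gU d x₀ - d (gU d x₀)) - (t - d t))).trans this
      have h2 : |gU d x₀ - t| = gU d x₀ - t := abs_of_nonneg (by linarith [ht.2])
      linarith [h2 ▸ h1]
    have hadd : TVd d 0 (gU d x₀) - TVd d 0 y = TVd d y (gU d x₀) := by
      have := tv_add hd3 h01 hyI' hyI; linarith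
    have hT : TVd d y (gU d x₀) ≤ gU d x₀ - y := tv_le hd3 hyI' hyI hc
    have hkey : fdelta d x₀ y - x₀ + (y - d y) ≤ t - d t := by
      simp only [fdelta] at hfle ⊢
      linarith
    have hfin : min (sInf ((fun t => t - d t) '' Icc x₀ y)) (t - d t)
        ≤ sInf ((fun t => t - d t) '' Icc x₀ (gU d x₀)) := by
      apply le_csInf hneS
      rintro b ⟨s, hs, rfl⟩
      rcases le_total s y with h | h
      · exact (min_le_left _ _).trans
          (csInf_le (bdd_below_img hd2 hx hyI') ⟨s, ⟨hs.1, h⟩, rfl⟩)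
      · refine (min_le_right _ _).trans ?_
        rw [← hμ]
        exact csInf_le (bdd_below_img hd2 hyI' hyI) ⟨s, ⟨h, hs.2⟩, rfl⟩
    rcases le_total (sInf ((fun t => t - d t) '' Icc x₀ y)) (t - d t) with h | h
    · have hEq : min (sInf ((fun t => t - d t) '' Icc x₀ y)) (t - d t)
          = sInf ((fun t => t - d t) '' Icc x₀ y) := min_eq_left h
      linarith [hEq ▸ hfin]
    · have hEq : min (sInf ((fun t => t - d t) '' Icc x₀ y)) (t - d t)
          = t - d t := min_eq_right h
      linarith [hEq ▸ hfin]
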